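/- arXiv:1710.04864 — 2 statements merged into one kernel-verified Lean document; each statement's English description precedes it below -/
import Mathlib

section
/- Let f, g : ℝ → ℂ and define the weighted convolution (f *ᴬ g)(t) = ∫_ℝ f(τ) g(t−τ) W(t,τ) dτ with weight W(t,τ) = exp(i·τ(τ−t)·a/b). If h = f *ᴬ g, then the linear canonical transforms satisfy H_A(u) = √(2πib) · e^{−i d u²/(2b)} · F_A(u) · G_A(u), where F_A, G_A, H_A denote the LCTs of f, g, h respectively (assuming f, g ∈ L¹(ℝ)). -/
open MeasureTheory Filter Complex

noncomputable def wconv (a b : ℝ) (f g : ℝ → ℂ) : ℝ → ℂ :=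
  fun t => ∫ τ : ℝ, f τ * g (t - τ) *
    Complex.exp (Complex.I * ((a : ℂ) / b * τ * (τ - t)))

noncomputable def lct (a b d : ℝ) (f : ℝ → ℂ) : ℝ → ℂ :=
  fun u => (1 / (2 * Real.pi * Complex.I * b)) ^ ((1 : ℂ) / 2) *
    ∫ t : ℝ, Complex.exp (Complex.I / 2 *
      ((a : ℂ) / b * t ^ 2 - 2 / b * u * t + (d : ℂ) / b * u ^ 2)) * f t

def IsDeltaSeq (a b : ℝ) (δ : ℕ → ℝ → ℂ) : Prop :=
  (∀ n, Continuous (δ n)) ∧ (∀ n, HasCompactSupport (δ n)) ∧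
  (∀ n, Integrable (δ n)) ∧ (∀ n, MemLp (δ n) 2) ∧
  (∀ n, ∫ t : ℝ, Complex.exp (Complex.I * a * t ^ 2 / (2 * b)) * δ n t = 1) ∧
  (∀ ε : ℝ, 0 < ε →
    Tendsto (fun n => ∫ t in {t : ℝ | ε < |t|}, ‖δ n t‖) atTop (nhds 0))

theorem lct_convolution (a b c d : ℝ) (hb : b ≠ 0) (h : a * d - b * c = 1)
    (f g : ℝ → ℂ) (hf : Integrable f) (hg : Integrable g) (u : ℝ) :
    lct a b d (wconv a b f g) u =
      (2 * Real.pi * Complex.I * b) ^ ((1 : ℂ) / 2) *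
        Complex.exp (-Complex.I * d * u ^ 2 / (2 * b)) *
        lct a b d f u * lct a b d g u := by
  have hbC : (b : ℂ) ≠ 0 := Complex.ofReal_ne_zero.mpr hb
  set K : ℝ → ℂ := fun t : ℝ => Complex.exp (Complex.I / 2 *
      ((a : ℂ) / b * (t : ℂ) ^ 2 - 2 / b * u * t + (d : ℂ) / b * u ^ 2)) with hKdef
  have hKnorm : ∀ t : ℝ, ‖K t‖ = 1 := by
    intro t
    have : Complex.I / 2 * ((a : ℂ) / b * (t : ℂ) ^ 2 - 2 / b * u * t + (d : ℂ) / b * u ^ 2)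
        = ((a / b * t ^ 2 - 2 / b * u * t + d / b * u ^ 2) / 2 : ℝ) * Complex.I := by
      push_cast; ring
    rw [hKdef]
    simp only [this, Complex.norm_exp_ofReal_mul_I]
  have hWnorm : ∀ t τ : ℝ, ‖Complex.exp (Complex.I * ((a : ℂ) / b * τ * (τ - t)))‖ = 1 := by
    intro t τ
    have : Complex.I * ((a : ℂ) / b * τ * ((τ : ℂ) - t))
        = ((a / b * τ * (τ - t) : ℝ) : ℂ) * Complex.I := by push_cast; ring
    rw [this, Complex.norm_exp_ofReal_mul_I]
  have hKcont : Continuous K := by rw [hKdef]; fun_prop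
  have hKf : Integrable (fun t => K t * f t) :=
    hf.bdd_mul hKcont.aestronglyMeasurable (c := 1) (Eventually.of_forall fun t => (hKnorm t).le)
  have hKg : Integrable (fun t => K t * g t) :=
    hg.bdd_mul hKcont.aestronglyMeasurable (c := 1) (Eventually.of_forall fun t => (hKnorm t).le)
  -- product integrability
  have hconv : Integrable (fun p : ℝ × ℝ => f p.2 * g (p.1 - p.2))
      ((volume : Measure ℝ).prod volume) := by
    have := hf.convolution_integrand (ContinuousLinearMap.mul ℂ ℂ) hg
    simpa using this
  have hEcont : Continuous (fun p : ℝ × ℝ =>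
      K p.1 * Complex.exp (Complex.I * ((a : ℂ) / b * p.2 * ((p.2 : ℂ) - p.1)))) := by
    apply (hKcont.comp continuous_fst).mul
    fun_prop
  have hint : Integrable (fun p : ℝ × ℝ =>
      K p.1 * (f p.2 * g (p.1 - p.2) *
        Complex.exp (Complex.I * ((a : ℂ) / b * p.2 * ((p.2 : ℂ) - p.1)))))
      ((volume : Measure ℝ).prod volume) := by
    have h1 : Integrable (fun p : ℝ × ℝ =>
        (K p.1 * Complex.exp (Complex.I * ((a : ℂ) / b * p.2 * ((p.2 : ℂ) - p.1)))) *
          (f p.2 * g (p.1 - p.2))) ((volume : Measure ℝ).prod volume) :=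
      hconv.bdd_mul hEcont.aestronglyMeasurable
        (c := 1) (Eventually.of_forall fun p => by rw [norm_mul, hKnorm, hWnorm]; norm_num)
    exact h1.congr (Eventually.of_forall fun p => by ring)
  -- the exponential identity
  have hexp : ∀ τ s : ℝ, K (s + τ) *
      Complex.exp (Complex.I * ((a : ℂ) / b * τ * ((τ : ℂ) - ((s + τ : ℝ) : ℂ))))
      = K τ * K s * Complex.exp (-Complex.I * d * (u : ℂ) ^ 2 / (2 * b)) := by
    intro τ s
    simp only [hKdef]
    rw [← Complex.exp_add, ← Complex.exp_add, ← Complex.exp_add]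
    congr 1
    push_cast
    field_simp
    ring
  -- inner integral computation
  have inner : ∀ τ : ℝ,
      (∫ t : ℝ, K t * (f τ * g (t - τ) *
        Complex.exp (Complex.I * ((a : ℂ) / b * τ * ((τ : ℂ) - t)))))
      = (K τ * f τ) * (Complex.exp (-Complex.I * d * (u : ℂ) ^ 2 / (2 * b)) *
          ∫ s : ℝ, K s * g s) := by
    intro τ
    rw [← integral_add_right_eq_self (fun t : ℝ => K t * (f τ * g (t - τ) *
        Complex.exp (Complex.I * ((a : ℂ) / b * τ * ((τ : ℂ) - t))))) τ]
    have hpt : ∀ s : ℝ, K (s + τ) * (f τ * g (s + τ - τ) *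
        Complex.exp (Complex.I * ((a : ℂ) / b * τ * ((τ : ℂ) - ((s + τ : ℝ) : ℂ)))))
        = ((K τ * f τ) * Complex.exp (-Complex.I * d * (u : ℂ) ^ 2 / (2 * b))) *
            (K s * g s) := by
      intro s
      rw [add_sub_cancel_right]
      linear_combination (f τ * g s) * hexp τ s
    calc (∫ s : ℝ, K (s + τ) * (f τ * g (s + τ - τ) *
            Complex.exp (Complex.I * ((a : ℂ) / b * τ * ((τ : ℂ) - ((s + τ : ℝ) : ℂ))))))
        = ∫ s : ℝ, ((K τ * f τ) * Complex.exp (-Complex.I * d * (u : ℂ) ^ 2 / (2 * b))) *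
            (K s * g s) := by
          exact integral_congr_ae (Eventually.of_forall fun s => hpt s)
      _ = (K τ * f τ) * (Complex.exp (-Complex.I * d * (u : ℂ) ^ 2 / (2 * b)) *
            ∫ s : ℝ, K s * g s) := by
          rw [integral_const_mul]; ring
  -- key double-integral identity
  have key : (∫ t : ℝ, K t * ∫ τ : ℝ, f τ * g (t - τ) *
        Complex.exp (Complex.I * ((a : ℂ) / b * τ * ((τ : ℂ) - t))))
      = Complex.exp (-Complex.I * d * (u : ℂ) ^ 2 / (2 * b)) *
          (∫ t : ℝ, K t * f t) * (∫ t : ℝ, K t * g t) := by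
    have swap := integral_integral_swap (f := fun t τ : ℝ => K t * (f τ * g (t - τ) *
        Complex.exp (Complex.I * ((a : ℂ) / b * τ * ((τ : ℂ) - t))))) hint
    calc (∫ t : ℝ, K t * ∫ τ : ℝ, f τ * g (t - τ) *
            Complex.exp (Complex.I * ((a : ℂ) / b * τ * ((τ : ℂ) - t))))
        = ∫ t : ℝ, ∫ τ : ℝ, K t * (f τ * g (t - τ) *
            Complex.exp (Complex.I * ((a : ℂ) / b * τ * ((τ : ℂ) - t)))) := by
          simp_rw [integral_const_mul]
      _ = ∫ τ : ℝ, ∫ t : ℝ, K t * (f τ * g (t - τ) *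
            Complex.exp (Complex.I * ((a : ℂ) / b * τ * ((τ : ℂ) - t)))) := swap
      _ = ∫ τ : ℝ, (K τ * f τ) * (Complex.exp (-Complex.I * d * (u : ℂ) ^ 2 / (2 * b)) *
            ∫ s : ℝ, K s * g s) := integral_congr_ae (Eventually.of_forall fun τ => inner τ)
      _ = Complex.exp (-Complex.I * d * (u : ℂ) ^ 2 / (2 * b)) *
          (∫ t : ℝ, K t * f t) * (∫ t : ℝ, K t * g t) := by
          rw [integral_mul_const]; ring
  -- constant cancellation
  have hZ : (2 * (Real.pi : ℂ) * Complex.I * b) ≠ 0 := by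
    refine mul_ne_zero (mul_ne_zero (mul_ne_zero two_ne_zero ?_) Complex.I_ne_zero) hbC
    exact_mod_cast Real.pi_ne_zero
  have harg : (2 * (Real.pi : ℂ) * Complex.I * b).arg ≠ Real.pi := by
    intro hp
    rw [Complex.arg_eq_pi_iff] at hp
    have h2 := hp.2
    simp [Complex.mul_im, Complex.mul_re] at h2
    exact hb h2
  have hcancel : (2 * (Real.pi : ℂ) * Complex.I * b) ^ ((1 : ℂ) / 2) *
      (1 / (2 * (Real.pi : ℂ) * Complex.I * b)) ^ ((1 : ℂ) / 2) = 1 := by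
    rw [show (1 : ℂ) / (2 * (Real.pi : ℂ) * Complex.I * b)
        = (2 * (Real.pi : ℂ) * Complex.I * b)⁻¹ from one_div _,
      Complex.inv_cpow _ _ harg]
    refine mul_inv_cancel₀ ?_
    simp [Complex.cpow_eq_zero_iff, hZ]
  -- conclude
  simp only [lct, wconv]
  rw [key]
  linear_combination (-((1 / (2 * (Real.pi : ℂ) * Complex.I * b)) ^ ((1 : ℂ) / 2) *
    Complex.exp (-Complex.I * d * (u : ℂ) ^ 2 / (2 * b)) *
    (∫ t : ℝ, K t * f t) * (∫ t : ℝ, K t * g t))) * hcancel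
end

section
/- The quotient relation defining Boehmians is an equivalence relation: for pairs (f_n, φ_n) and (g_n, ψ_n) of sequences with f_n, g_n ∈ L¹(ℝ) ∩ L²(ℝ), {φ_n}, {ψ_n} delta sequences, satisfying f_m *ᴬ φ_n = f_n *ᴬ φ_m and g_m *ᴬ ψ_n = g_n *ᴬ ψ_m for all m, n, the relation (f_n/φ_n) ~ (g_n/ψ_n) iff f_n *ᴬ ψ_n = g_n *ᴬ φ_n for all n, is reflexive, symmetric, and transitive. -/
open MeasureTheory Filter Complex

def IsQuot (a b : ℝ) (f : ℕ → ℝ → ℂ) (φ : ℕ → ℝ → ℂ) : Prop :=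
  (∀ n, Integrable (f n)) ∧ (∀ n, MemLp (f n) 2) ∧ IsDeltaSeq a b φ ∧
    ∀ m n, wconv a b (f m) (φ n) =ᵐ[volume] wconv a b (f n) (φ m)

def QuotRel (a b : ℝ) (p q : (ℕ → ℝ → ℂ) × (ℕ → ℝ → ℂ)) : Prop :=
  ∀ n, wconv a b (p.1 n) (q.2 n) =ᵐ[volume] wconv a b (q.1 n) (p.2 n)

/- ### Auxiliary development -/

open Real Metric Module
open scoped FourierTransform Convolution Topology RealInnerProductSpace

namespace QRaux

/-- Ordinary convolution of two complex functions on `ℝ`. -/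
noncomputable def cvl (f g : ℝ → ℂ) : ℝ → ℂ :=
  MeasureTheory.convolution f g (ContinuousLinearMap.mul ℂ ℂ) volume

lemma mulCC_flip : (ContinuousLinearMap.mul ℂ ℂ).flip = ContinuousLinearMap.mul ℂ ℂ := by
  refine ContinuousLinearMap.ext fun x => ContinuousLinearMap.ext fun y => ?_
  simp [mul_comm]

lemma cvl_comm (f g : ℝ → ℂ) : cvl f g = cvl g f := by
  unfold cvl; rw [← convolution_flip, mulCC_flip]

lemma cvl_congr_left {u v : ℝ → ℂ} (g : ℝ → ℂ) (h : u =ᵐ[volume] v) : cvl u g = cvl v g := by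
  funext x
  refine integral_congr_ae ?_
  filter_upwards [h] with τ hτ
  rw [hτ]

lemma cvl_integrable {u v : ℝ → ℂ} (hu : Integrable u) (hv : Integrable v) :
    Integrable (cvl u v) :=
  hu.integrable_convolution (ContinuousLinearMap.mul ℂ ℂ) hv

lemma cvl_continuous {u g : ℝ → ℂ} (hu : Integrable u) (hgc : Continuous g)
    (hgs : HasCompactSupport g) : Continuous (cvl u g) :=
  HasCompactSupport.continuous_convolution_right _ hgs hu.locallyIntegrable hgc

lemma cvl_assoc {u g k : ℝ → ℂ} (hu : Integrable u)
    (hgc : Continuous g) (hgs : HasCompactSupport g)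
    (hkc : Continuous k) (hks : HasCompactSupport k) :
    cvl (cvl u g) k = cvl u (cvl g k) := by
  funext x₀
  refine convolution_assoc (ContinuousLinearMap.mul ℂ ℂ) (ContinuousLinearMap.mul ℂ ℂ)
    (ContinuousLinearMap.mul ℂ ℂ) (ContinuousLinearMap.mul ℂ ℂ)
    (fun x y z => mul_assoc x y z)
    hu.aestronglyMeasurable hgc.aestronglyMeasurable hkc.aestronglyMeasurable
    (Filter.Eventually.of_forall
      (HasCompactSupport.convolutionExists_right _ hgs hu.locallyIntegrable hgc))
    (Filter.Eventually.of_forall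
      (HasCompactSupport.convolutionExists_right _ hks.norm
        hgc.norm.locallyIntegrable hkc.norm))
    (by
      have hGK : HasCompactSupport
          ((fun x => ‖g x‖) ⋆[ContinuousLinearMap.mul ℝ ℝ, volume] fun x => ‖k x‖) :=
        HasCompactSupport.convolution (L := ContinuousLinearMap.mul ℝ ℝ) hgs.norm hks.norm
      exact HasCompactSupport.convolutionExists_right _
        hGK hu.norm.locallyIntegrable
        (HasCompactSupport.continuous_convolution_right _ hks.norm
          hgc.norm.locallyIntegrable hkc.norm) x₀)

lemma cvl_right_swap {u g k : ℝ → ℂ} (hu : Integrable u)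
    (hgc : Continuous g) (hgs : HasCompactSupport g)
    (hkc : Continuous k) (hks : HasCompactSupport k) :
    cvl (cvl u g) k = cvl (cvl u k) g := by
  rw [cvl_assoc hu hgc hgs hkc hks, cvl_comm g k, ← cvl_assoc hu hkc hks hgc hgs]

/- ### The chirp transform -/

noncomputable def ch (a b : ℝ) (f : ℝ → ℂ) : ℝ → ℂ :=
  fun t => Complex.exp (Complex.I * a * t ^ 2 / (2 * b)) * f t

lemma continuous_chfactor (a b : ℝ) :
    Continuous fun t : ℝ => Complex.exp (Complex.I * a * t ^ 2 / (2 * b)) := by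
  fun_prop

lemma norm_chfactor (a b : ℝ) (t : ℝ) :
    ‖Complex.exp (Complex.I * a * t ^ 2 / (2 * b))‖ = 1 := by
  have h : Complex.I * a * t ^ 2 / (2 * b) = ((a * t ^ 2 / (2 * b) : ℝ) : ℂ) * Complex.I := by
    push_cast; ring
  rw [h, Complex.norm_exp_ofReal_mul_I]

lemma ch_integrable (a b : ℝ) {f : ℝ → ℂ} (hf : Integrable f) : Integrable (ch a b f) :=
  hf.bdd_mul (continuous_chfactor a b).aestronglyMeasurable
    (Filter.Eventually.of_forall fun t => le_of_eq (norm_chfactor a b t))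

lemma ch_continuous (a b : ℝ) {f : ℝ → ℂ} (hf : Continuous f) : Continuous (ch a b f) :=
  (continuous_chfactor a b).mul hf

lemma ch_hcs (a b : ℝ) {f : ℝ → ℂ} (hf : HasCompactSupport f) : HasCompactSupport (ch a b f) :=
  hf.mul_left

lemma ch_wconv (a : ℝ) {b : ℝ} (hb : b ≠ 0) (f g : ℝ → ℂ) (t : ℝ) :
    cvl (ch a b f) (ch a b g) t
      = Complex.exp (Complex.I * a * t ^ 2 / (2 * b)) * wconv a b f g t := by
  unfold cvl wconv
  rw [convolution_def, ← MeasureTheory.integral_const_mul]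
  refine integral_congr_ae (Filter.Eventually.of_forall fun τ => ?_)
  simp only [ContinuousLinearMap.mul_apply', ch]
  have hexp : Complex.exp (Complex.I * a * τ ^ 2 / (2 * b)) *
      Complex.exp (Complex.I * a * (t - τ : ℝ) ^ 2 / (2 * b))
      = Complex.exp (Complex.I * a * t ^ 2 / (2 * b)) *
        Complex.exp (Complex.I * ((a : ℂ) / b * τ * (τ - t))) := by
    rw [← Complex.exp_add, ← Complex.exp_add]
    congr 1
    have hb' : (b : ℂ) ≠ 0 := by exact_mod_cast hb
    push_cast
    field_simp
    ring
  calc Complex.exp (Complex.I * a * τ ^ 2 / (2 * b)) * f τ *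
        (Complex.exp (Complex.I * a * (t - τ : ℝ) ^ 2 / (2 * b)) * g (t - τ))
      = (Complex.exp (Complex.I * a * τ ^ 2 / (2 * b)) *
          Complex.exp (Complex.I * a * (t - τ : ℝ) ^ 2 / (2 * b))) * (f τ * g (t - τ)) := by ring
    _ = (Complex.exp (Complex.I * a * t ^ 2 / (2 * b)) *
          Complex.exp (Complex.I * ((a : ℂ) / b * τ * (τ - t)))) * (f τ * g (t - τ)) := by
        rw [hexp]
    _ = Complex.exp (Complex.I * a * t ^ 2 / (2 * b)) *
        (f τ * g (t - τ) * Complex.exp (Complex.I * ((a : ℂ) / b * τ * (τ - t)))) := by ring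

lemma cvl_ae_of_wconv_ae (a : ℝ) {b : ℝ} (hb : b ≠ 0) {f g u v : ℝ → ℂ}
    (h : wconv a b f g =ᵐ[volume] wconv a b u v) :
    cvl (ch a b f) (ch a b g) =ᵐ[volume] cvl (ch a b u) (ch a b v) := by
  filter_upwards [h] with t ht
  rw [ch_wconv a hb, ch_wconv a hb, ht]

lemma wconv_eq_of_cvl_eq (a : ℝ) {b : ℝ} (hb : b ≠ 0) {f g u v : ℝ → ℂ}
    (h : cvl (ch a b f) (ch a b g) = cvl (ch a b u) (ch a b v)) :
    wconv a b f g = wconv a b u v := by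
  funext t
  have h1 := ch_wconv a hb f g t
  have h2 := ch_wconv a hb u v t
  rw [h] at h1
  rw [h2] at h1
  exact (mul_left_cancel₀ (Complex.exp_ne_zero _) h1.symm)

/- ### Fourier transform of convolutions -/

lemma unitmul_integrable {φ : ℝ → ℝ} (hφ : Continuous φ) {f : ℝ → ℂ} (hf : Integrable f) :
    Integrable (fun t => Complex.exp ((φ t : ℂ) * Complex.I) * f t) :=
  hf.bdd_mul ((Complex.continuous_exp.comp
      ((Complex.continuous_ofReal.comp hφ).mul continuous_const)).aestronglyMeasurable)
    (Filter.Eventually.of_forall fun t => le_of_eq (by rw [Complex.norm_exp_ofReal_mul_I]))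

lemma fourier_cvl {u v : ℝ → ℂ} (hu : Integrable u) (hv : Integrable v) (w : ℝ) :
    𝓕 (cvl u v) w = 𝓕 u w * 𝓕 v w := by
  have hKmul : ∀ s t : ℝ, Complex.exp (((-2 * π * (s + t) * w : ℝ) : ℂ) * Complex.I)
      = Complex.exp (((-2 * π * s * w : ℝ) : ℂ) * Complex.I) *
        Complex.exp (((-2 * π * t * w : ℝ) : ℂ) * Complex.I) := by
    intro s t
    rw [← Complex.exp_add]
    congr 1
    push_cast
    ring
  have hKu : Integrable (fun t : ℝ =>
      Complex.exp (((-2 * π * t * w : ℝ) : ℂ) * Complex.I) * u t) :=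
    unitmul_integrable (by fun_prop) hu
  have hKv : Integrable (fun t : ℝ =>
      Complex.exp (((-2 * π * t * w : ℝ) : ℂ) * Complex.I) * v t) :=
    unitmul_integrable (by fun_prop) hv
  have key : (fun t : ℝ => Complex.exp (((-2 * π * t * w : ℝ) : ℂ) * Complex.I) * cvl u v t)
      = cvl (fun t => Complex.exp (((-2 * π * t * w : ℝ) : ℂ) * Complex.I) * u t)
            (fun t => Complex.exp (((-2 * π * t * w : ℝ) : ℂ) * Complex.I) * v t) := by
    funext t
    unfold cvl
    rw [convolution_def, convolution_def, ← MeasureTheory.integral_const_mul]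
    refine integral_congr_ae (Filter.Eventually.of_forall fun τ => ?_)
    simp only [ContinuousLinearMap.mul_apply']
    have ht : (t : ℝ) = τ + (t - τ) := by ring
    calc Complex.exp (((-2 * π * t * w : ℝ) : ℂ) * Complex.I) * (u τ * v (t - τ))
        = Complex.exp (((-2 * π * (τ + (t - τ)) * w : ℝ) : ℂ) * Complex.I) *
            (u τ * v (t - τ)) := by rw [← ht]
      _ = _ := by rw [hKmul]; ring
  have h1 : 𝓕 (cvl u v) w
      = ∫ t : ℝ, Complex.exp (((-2 * π * t * w : ℝ) : ℂ) * Complex.I) * cvl u v t := by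
    rw [Real.fourier_real_eq_integral_exp_smul]
    exact integral_congr_ae (Filter.Eventually.of_forall fun t => smul_eq_mul ..)
  have h2 : 𝓕 u w = ∫ t : ℝ, Complex.exp (((-2 * π * t * w : ℝ) : ℂ) * Complex.I) * u t := by
    rw [Real.fourier_real_eq_integral_exp_smul]
    exact integral_congr_ae (Filter.Eventually.of_forall fun t => smul_eq_mul ..)
  have h3 : 𝓕 v w = ∫ t : ℝ, Complex.exp (((-2 * π * t * w : ℝ) : ℂ) * Complex.I) * v t := by
    rw [Real.fourier_real_eq_integral_exp_smul]
    exact integral_congr_ae (Filter.Eventually.of_forall fun t => smul_eq_mul ..)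
  rw [h1, h2, h3, key]
  unfold cvl
  rw [integral_convolution (ContinuousLinearMap.mul ℂ ℂ) hKu hKv]
  simp

/- ### Analyticity and density of non-vanishing of Fourier transforms of compactly
supported functions -/

noncomputable def FC (ψ : ℝ → ℂ) : ℂ → ℂ :=
  fun z => ∫ t : ℝ, Complex.exp (((-2 * π * t : ℝ) : ℂ) * z * Complex.I) * ψ t

lemma FC_real {ψ : ℝ → ℂ} (w : ℝ) : FC ψ w = 𝓕 ψ w := by
  rw [Real.fourier_real_eq_integral_exp_smul]
  refine integral_congr_ae (Filter.Eventually.of_forall fun t => ?_)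
  simp only [smul_eq_mul]
  congr 2
  push_cast
  ring

lemma FC_zero {ψ : ℝ → ℂ} : FC ψ 0 = ∫ t : ℝ, ψ t := by
  unfold FC
  simp

lemma FC_differentiable {ψ : ℝ → ℂ} (hc : Continuous ψ) (hs : HasCompactSupport ψ) :
    Differentiable ℂ (FC ψ) := by
  intro z₀
  obtain ⟨R, hR0, hR⟩ : ∃ R, 0 < R ∧ tsupport ψ ⊆ closedBall (0:ℝ) R := by
    obtain ⟨R, hR⟩ := hs.isCompact.isBounded.subset_closedBall 0
    exact ⟨max R 1, lt_of_lt_of_le one_pos (le_max_right _ _),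
      subset_trans hR (closedBall_subset_closedBall (le_max_left _ _))⟩
  have hψi : Integrable ψ := hc.integrable_of_hasCompactSupport hs
  set C : ℝ := 2 * π * R * Real.exp (2 * π * R * (|z₀.im| + 1)) with hC
  have hcont : ∀ z : ℂ, Continuous fun t : ℝ => (((-2 * π * t : ℝ) : ℂ) * z * Complex.I) := by
    intro z
    exact ((Complex.continuous_ofReal.comp (by fun_prop)).mul continuous_const).mul
      continuous_const
  have main := hasDerivAt_integral_of_dominated_loc_of_deriv_le (μ := volume)
    (F := fun (z : ℂ) (t : ℝ) => Complex.exp (((-2 * π * t : ℝ) : ℂ) * z * Complex.I) * ψ t)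
    (F' := fun (z : ℂ) (t : ℝ) =>
      Complex.exp (((-2 * π * t : ℝ) : ℂ) * z * Complex.I) *
        (((-2 * π * t : ℝ) : ℂ) * Complex.I) * ψ t)
    (x₀ := z₀) (bound := fun t => C * ‖ψ t‖) (s := ball z₀ 1) (ball_mem_nhds z₀ one_pos)
    ?_ ?_ ?_ ?_ ?_ ?_
  · exact main.2.differentiableAt
  · exact Filter.Eventually.of_forall fun z =>
      (Continuous.aestronglyMeasurable ((Complex.continuous_exp.comp (hcont z)).mul hc))
  · exact (((Complex.continuous_exp.comp (hcont z₀)).mul hc).integrable_of_hasCompactSupport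
      hs.mul_left)
  · exact Continuous.aestronglyMeasurable
      (((Complex.continuous_exp.comp (hcont z₀)).mul
        ((Complex.continuous_ofReal.comp (by fun_prop : Continuous fun t : ℝ => -2 * π * t)).mul
          continuous_const)).mul hc)
  · refine Filter.Eventually.of_forall fun t => fun z hz => ?_
    by_cases hψt : ψ t = 0
    · simp [hψt, hC]
    · have ht : |t| ≤ R := by
        have : t ∈ tsupport ψ := subset_closure (by simpa [Function.mem_support] using hψt)
        simpa [Real.dist_eq] using hR this
      have him : |z.im| ≤ |z₀.im| + 1 := by
        have h1 := abs_sub_abs_le_abs_sub z.im z₀.im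
        have h2 : |z.im - z₀.im| ≤ dist z z₀ := by
          rw [Complex.dist_eq]
          simpa using Complex.abs_im_le_norm (z - z₀)
        have h3 : dist z z₀ < 1 := mem_ball.mp hz
        linarith
      rw [norm_mul, norm_mul]
      have habs : |(-2) * π * t| = 2 * π * |t| := by
        rw [abs_mul, abs_mul]
        simp [_root_.abs_of_nonneg Real.pi_pos.le]
      have e1 : ‖(((-2 * π * t : ℝ) : ℂ) * Complex.I)‖ ≤ 2 * π * R := by
        rw [norm_mul, Complex.norm_I, mul_one, Complex.norm_real, Real.norm_eq_abs, habs]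
        nlinarith [Real.pi_pos]
      have e2 : ‖Complex.exp (((-2 * π * t : ℝ) : ℂ) * z * Complex.I)‖
          ≤ Real.exp (2 * π * R * (|z₀.im| + 1)) := by
        rw [Complex.norm_exp]
        apply Real.exp_le_exp.2
        have hre : ((((-2 * π * t : ℝ) : ℂ)) * z * Complex.I).re = -((-2 * π * t) * z.im) := by
          rw [mul_assoc, Complex.re_ofReal_mul, Complex.mul_I_re]
          ring
        rw [hre]
        calc -((-2 * π * t) * z.im) = (2 * π * t) * z.im := by ring
          _ ≤ |(2 * π * t) * z.im| := le_abs_self _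
          _ = (2 * π * |t|) * |z.im| := by
              rw [abs_mul, abs_mul, abs_mul]
              simp [_root_.abs_of_nonneg Real.pi_pos.le]
          _ ≤ (2 * π * R) * (|z₀.im| + 1) := by
              apply mul_le_mul _ him (abs_nonneg _) (by positivity)
              nlinarith [Real.pi_pos]
      calc ‖Complex.exp (((-2 * π * t : ℝ) : ℂ) * z * Complex.I)‖ *
            ‖(((-2 * π * t : ℝ) : ℂ) * Complex.I)‖ * ‖ψ t‖
          ≤ Real.exp (2 * π * R * (|z₀.im| + 1)) * (2 * π * R) * ‖ψ t‖ := by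
            apply mul_le_mul_of_nonneg_right _ (norm_nonneg _)
            exact mul_le_mul e2 e1 (norm_nonneg _) (by positivity)
        _ = C * ‖ψ t‖ := by rw [hC]; ring
  · exact hψi.norm.const_mul C
  · refine Filter.Eventually.of_forall fun t => fun z hz => ?_
    have h1 : HasDerivAt (fun z : ℂ => (((-2 * π * t : ℝ) : ℂ)) * z * Complex.I)
        ((((-2 * π * t : ℝ) : ℂ)) * Complex.I) z := by
      simpa using (((hasDerivAt_id z).const_mul (((-2 * π * t : ℝ) : ℂ))).mul_const Complex.I)
    exact (h1.cexp.mul_const (ψ t))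

lemma dense_fourier_ne_zero {ψ : ℝ → ℂ} (hc : Continuous ψ) (hs : HasCompactSupport ψ)
    (h1 : (∫ t : ℝ, ψ t) ≠ 0) : Dense {w : ℝ | 𝓕 ψ w ≠ 0} := by
  rw [dense_iff_inter_open]
  rintro U hU ⟨x, hx⟩
  by_contra hem
  rw [Set.not_nonempty_iff_eq_empty] at hem
  have hzero : ∀ w : ℝ, w ∈ U → 𝓕 ψ w = 0 := by
    intro w hw
    by_contra hne
    exact Set.eq_empty_iff_forall_notMem.mp hem w ⟨hw, hne⟩
  obtain ⟨ε, hε, hball⟩ := Metric.isOpen_iff.mp hU x hx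
  have hfreq : ∃ᶠ z in 𝓝[≠] (x : ℂ), FC ψ z = 0 := by
    have htend : Tendsto (fun n : ℕ => ((x + ε / (n + 2) : ℝ) : ℂ)) atTop (𝓝[≠] (x : ℂ)) := by
      rw [tendsto_nhdsWithin_iff]
      constructor
      · have hr : Tendsto (fun n : ℕ => (x + ε / (n + 2) : ℝ)) atTop (𝓝 x) := by
          have h0 : Tendsto (fun n : ℕ => ε / (n + 2)) atTop (𝓝 0) := by
            apply Tendsto.div_atTop (tendsto_const_nhds)
            exact tendsto_atTop_add_const_right _ 2 tendsto_natCast_atTop_atTop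
          simpa using tendsto_const_nhds.add h0
        exact (Complex.continuous_ofReal.tendsto x).comp hr
      · refine Filter.Eventually.of_forall fun n => ?_
        simp only [Set.mem_compl_iff, Set.mem_singleton_iff, ne_eq]
        intro hcontra
        have heq : (x + ε / (n + 2) : ℝ) = x := by exact_mod_cast hcontra
        have hpos : 0 < ε / (n + 2) := by positivity
        linarith
    refine htend.frequently (Filter.Frequently.of_forall fun n => ?_)
    have hmem : (x + ε / (n + 2) : ℝ) ∈ U := by
      apply hball
      rw [mem_ball, Real.dist_eq]
      have hpos : 0 < ε / (n + 2) := by positivity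
      have hlt : ε / (n + 2) < ε := by
        rw [div_lt_iff₀ (by positivity)]
        nlinarith
      rw [abs_of_pos]
      · linarith [hlt]
      · linarith [hpos]
    rw [FC_real]
    exact hzero _ hmem
  have hanal : AnalyticOnNhd ℂ (FC ψ) Set.univ :=
    (FC_differentiable hc hs).differentiableOn.analyticOnNhd isOpen_univ
  have hEq := hanal.eqOn_zero_of_preconnected_of_frequently_eq_zero
    isPreconnected_univ (Set.mem_univ (x : ℂ)) hfreq
  have h0 : FC ψ 0 = 0 := hEq (Set.mem_univ 0)
  rw [FC_zero] at h0
  exact h1 h0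

/- ### Uniqueness from equal Fourier transforms -/

variable {V : Type*} [NormedAddCommGroup V] [InnerProductSpace ℝ V]
  [MeasurableSpace V] [BorelSpace V] [FiniteDimensional ℝ V]

lemma gauss_repr {f : V → ℂ} (hf : Integrable f) (v : V) {c : ℝ} (hc : 0 < c) :
    ∫ w : V, ((π * c : ℂ) ^ (finrank ℝ V / 2 : ℂ) * cexp (-π ^ 2 * c * ‖v - w‖ ^ 2)) • f w
      = ∫ w : V, cexp (-(c : ℂ)⁻¹ * ‖w‖ ^ 2 + 2 * π * I * ⟪v, w⟫) • 𝓕 f w := by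
  have J : Integrable (fun w : V ↦ cexp (-(c : ℂ)⁻¹ * ‖w‖ ^ 2 + 2 * π * I * ⟪v, w⟫)) :=
    GaussianFourier.integrable_cexp_neg_mul_sq_norm_add (by simpa) _ _
  have B := VectorFourier.integral_fourierIntegral_smul_eq_flip (L := innerₗ V)
    Real.continuous_fourierChar continuous_inner J hf
  have B' : ∫ w : V, 𝓕 (fun w : V ↦ cexp (-(c : ℂ)⁻¹ * ‖w‖ ^ 2 + 2 * π * I * ⟪v, w⟫)) w • f w
      = ∫ w : V, cexp (-(c : ℂ)⁻¹ * ‖w‖ ^ 2 + 2 * π * I * ⟪v, w⟫) • 𝓕 f w := by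
    simpa using! B
  rw [← B']
  congr with w
  rw [fourier_gaussian_innerProductSpace' (by simpa)]
  have hc0 : (c : ℂ) ≠ 0 := by exact_mod_cast hc.ne'
  congr 1
  congr 1
  · congr 1
    field_simp
  · congr 1
    field_simp

lemma eq_of_fourierIntegral_eq {f g : V → ℂ} (hf : Integrable f) (hfc : Continuous f)
    (hg : Integrable g) (hgc : Continuous g) (h : ∀ w, 𝓕 f w = 𝓕 g w) : f = g := by
  ext v
  have hAB : (fun c : ℝ => ∫ w : V,
        ((π * c : ℂ) ^ (finrank ℝ V / 2 : ℂ) * cexp (-π ^ 2 * c * ‖v - w‖ ^ 2)) • f w)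
      =ᶠ[atTop] (fun c : ℝ => ∫ w : V,
        ((π * c : ℂ) ^ (finrank ℝ V / 2 : ℂ) * cexp (-π ^ 2 * c * ‖v - w‖ ^ 2)) • g w) := by
    filter_upwards [Ioi_mem_atTop 0] with c (hc : 0 < c)
    rw [gauss_repr hf v hc, gauss_repr hg v hc]
    congr with w
    rw [h w]
  exact tendsto_nhds_unique
    ((Real.tendsto_integral_gaussian_smul' hf hfc.continuousAt).congr' hAB)
    (Real.tendsto_integral_gaussian_smul' hg hgc.continuousAt)

/- ### Cancellation -/

lemma cancel {u v ψ : ℝ → ℂ} (hu : Integrable u) (huc : Continuous u)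
    (hv : Integrable v) (hvc : Continuous v)
    (hψc : Continuous ψ) (hψs : HasCompactSupport ψ) (hψ1 : (∫ t : ℝ, ψ t) ≠ 0)
    (h : cvl u ψ = cvl v ψ) : u = v := by
  have hψi : Integrable ψ := hψc.integrable_of_hasCompactSupport hψs
  have hF : ∀ w, 𝓕 u w * 𝓕 ψ w = 𝓕 v w * 𝓕 ψ w := fun w => by
    rw [← fourier_cvl hu hψi, ← fourier_cvl hv hψi, h]
  have hcontu : Continuous (𝓕 u) :=
    VectorFourier.fourierIntegral_continuous Real.continuous_fourierChar continuous_inner hu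
  have hcontv : Continuous (𝓕 v) :=
    VectorFourier.fourierIntegral_continuous Real.continuous_fourierChar continuous_inner hv
  have heqon : Set.EqOn (𝓕 u) (𝓕 v) {w : ℝ | 𝓕 ψ w ≠ 0} := fun w hw =>
    mul_right_cancel₀ hw (hF w)
  have heq : 𝓕 u = 𝓕 v :=
    Continuous.ext_on (dense_fourier_ne_zero hψc hψs hψ1) hcontu hcontv heqon
  exact eq_of_fourierIntegral_eq hu huc hv hvc (fun w => congrFun heq w)

end QRaux

open QRaux in
theorem quotRel_equivalence (a b : ℝ) (hb : b ≠ 0) :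
    (∀ p, IsQuot a b p.1 p.2 → QuotRel a b p p) ∧
    (∀ p q, IsQuot a b p.1 p.2 → IsQuot a b q.1 q.2 →
      QuotRel a b p q → QuotRel a b q p) ∧
    (∀ p q r, IsQuot a b p.1 p.2 → IsQuot a b q.1 q.2 → IsQuot a b r.1 r.2 →
      QuotRel a b p q → QuotRel a b q r → QuotRel a b p r) := by
  refine ⟨?_, ?_, ?_⟩
  · intro p _ n
    rfl
  · intro p q _ _ h n
    exact (h n).symm
  · rintro p q r ⟨hfInt, -, ⟨hφc, hφs, hφi, -, hφ1, -⟩, -⟩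
      ⟨hgInt, -, ⟨hψc, hψs, hψi, -, hψ1, -⟩, -⟩
      ⟨hhInt, -, ⟨hρc, hρs, hρi, -, hρ1, -⟩, -⟩ hpq hqr n
    -- chirped functions
    set F := ch a b (p.1 n) with hF
    set Φ := ch a b (p.2 n) with hΦ
    set G := ch a b (q.1 n) with hG
    set Ψ := ch a b (q.2 n) with hΨ
    set H := ch a b (r.1 n) with hH
    set Ρ := ch a b (r.2 n) with hΡ
    have hFi : Integrable F := ch_integrable a b (hfInt n)
    have hGi : Integrable G := ch_integrable a b (hgInt n)
    have hHi : Integrable H := ch_integrable a b (hhInt n)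
    have hΦc : Continuous Φ := ch_continuous a b (hφc n)
    have hΦs : HasCompactSupport Φ := ch_hcs a b (hφs n)
    have hΨc : Continuous Ψ := ch_continuous a b (hψc n)
    have hΨs : HasCompactSupport Ψ := ch_hcs a b (hψs n)
    have hΡc : Continuous Ρ := ch_continuous a b (hρc n)
    have hΡs : HasCompactSupport Ρ := ch_hcs a b (hρs n)
    have hΨ1 : (∫ t : ℝ, Ψ t) ≠ 0 := by
      have : (∫ t : ℝ, Ψ t) = 1 := by
        rw [hΨ]
        exact hψ1 n
      rw [this]
      exact one_ne_zero
    -- the main chain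
    have h1 : cvl F Ψ =ᵐ[volume] cvl G Φ := cvl_ae_of_wconv_ae a hb (hpq n)
    have h2 : cvl G Ρ =ᵐ[volume] cvl H Ψ := cvl_ae_of_wconv_ae a hb (hqr n)
    have e1 : cvl (cvl F Ρ) Ψ = cvl (cvl F Ψ) Ρ := cvl_right_swap hFi hΡc hΡs hΨc hΨs
    have e2 : cvl (cvl F Ψ) Ρ = cvl (cvl G Φ) Ρ := cvl_congr_left Ρ h1
    have e3 : cvl (cvl G Φ) Ρ = cvl (cvl G Ρ) Φ := cvl_right_swap hGi hΦc hΦs hΡc hΡs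
    have e4 : cvl (cvl G Ρ) Φ = cvl (cvl H Ψ) Φ := cvl_congr_left Φ h2
    have e5 : cvl (cvl H Ψ) Φ = cvl (cvl H Φ) Ψ := cvl_right_swap hHi hΨc hΨs hΦc hΦs
    have hXY : cvl (cvl F Ρ) Ψ = cvl (cvl H Φ) Ψ :=
      e1.trans (e2.trans (e3.trans (e4.trans e5)))
    have hmain : cvl F Ρ = cvl H Φ :=
      cancel (cvl_integrable hFi (ch_integrable a b (hρi n)))
        (cvl_continuous hFi hΡc hΡs)
        (cvl_integrable hHi (ch_integrable a b (hφi n)))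
        (cvl_continuous hHi hΦc hΦs)
        hΨc hΨs hΨ1 hXY
    have : wconv a b (p.1 n) (r.2 n) = wconv a b (r.1 n) (p.2 n) :=
      wconv_eq_of_cvl_eq a hb hmain
    rw [this]
end
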